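/- Let Σ be a symmetric positive definite real p×p matrix, β : [0,1] → ℝ^p a continuous function, and β₀ ∈ ℝ^p. Suppose that for each n we are given an integer k_n with k_n → ∞ as n → ∞, symmetric positive definite real p×p matrices V_{n,1}, …, V_{n,k_n} such that sup_{n, i ≤ k_n} ‖V_{n,i}^{-1/2}‖ ≤ K for some finite K and max_{i ≤ k_n} ‖V_{n,i}^{1/2} − Σ^{1/2}‖ → 0 as n → ∞, reals M_n ≥ 0 with M_n → 0, and vectors d_{n,1}, …, d_{n,k_n} ∈ ℝ^p satisfying ‖d_{n,i} − V_{n,i}(β(i/k_n) − β₀)‖ ≤ (M_n/2)·‖β(i/k_n) − β₀‖² for every i ≤ k_n. Then sup_{t ∈ [0,1]} ‖ (1/k_n) Σ_{i=1}^{⌊t·k_n⌋} V_{n,i}^{-1/2} d_{n,i} − Σ^{1/2} ∫₀ᵗ (β(s) − β₀) ds ‖ → 0 as n → ∞. -/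

import Mathlib

open Filter MeasureTheory

set_option maxHeartbeats 1600000 in
/-- deterministic core of the drift convergence in Theorem 1.
`Sig` is a symmetric positive definite `p × p` matrix with positive semidefinite
square root `S` (so `S * S = Sig`); for each `n` and `1 ≤ i ≤ k n`, `W n i` is the
positive semidefinite square root of the positive definite matrix `V n i`, and
`(W n i)⁻¹ = (V n i)^{-1/2}`.  Matrix norms are the operator norms induced by the
Euclidean norm, via `Matrix.toEuclideanCLM`. -/
theorem stmt0 (p : ℕ)
    (Sig : Matrix (Fin p) (Fin p) ℝ) (hSigsymm : Sig.IsSymm) (hSig : Sig.PosDef)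
    (S : Matrix (Fin p) (Fin p) ℝ) (hS : S.PosSemidef) (hSsq : S * S = Sig)
    (β : ℝ → EuclideanSpace ℝ (Fin p)) (hβ : ContinuousOn β (Set.Icc 0 1))
    (β₀ : EuclideanSpace ℝ (Fin p))
    (k : ℕ → ℕ) (hk : Tendsto k atTop atTop)
    (V : ℕ → ℕ → Matrix (Fin p) (Fin p) ℝ)
    (hVsymm : ∀ n i, 1 ≤ i → i ≤ k n → (V n i).IsSymm)
    (hV : ∀ n i, 1 ≤ i → i ≤ k n → (V n i).PosDef)
    (W : ℕ → ℕ → Matrix (Fin p) (Fin p) ℝ)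
    (hWpsd : ∀ n i, 1 ≤ i → i ≤ k n → (W n i).PosSemidef)
    (hWsq : ∀ n i, 1 ≤ i → i ≤ k n → W n i * W n i = V n i)
    (K : ℝ)
    (hK : ∀ n i, 1 ≤ i → i ≤ k n → ‖Matrix.toEuclideanCLM (𝕜 := ℝ) ((W n i)⁻¹)‖ ≤ K)
    (hWconv : ∀ ε > (0:ℝ), ∃ N, ∀ n ≥ N, ∀ i, 1 ≤ i → i ≤ k n →
      ‖Matrix.toEuclideanCLM (𝕜 := ℝ) (W n i - S)‖ < ε)
    (M : ℕ → ℝ) (hM0 : ∀ n, 0 ≤ M n) (hM : Tendsto M atTop (nhds 0))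
    (d : ℕ → ℕ → EuclideanSpace ℝ (Fin p))
    (hd : ∀ n i, 1 ≤ i → i ≤ k n →
      ‖d n i - Matrix.toEuclideanCLM (𝕜 := ℝ) (V n i) (β ((i : ℝ) / (k n : ℝ)) - β₀)‖ ≤
        M n / 2 * ‖β ((i : ℝ) / (k n : ℝ)) - β₀‖ ^ 2) :
    TendstoUniformlyOn
      (fun n t =>
        ((k n : ℝ))⁻¹ • ∑ i ∈ Finset.Icc 1 ⌊t * (k n : ℝ)⌋₊,
            Matrix.toEuclideanCLM (𝕜 := ℝ) ((W n i)⁻¹) (d n i)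
          - Matrix.toEuclideanCLM (𝕜 := ℝ) S (∫ s in (0:ℝ)..t, (β s - β₀)))
      0 atTop (Set.Icc 0 1) := by
  classical
  set x : ℝ → EuclideanSpace ℝ (Fin p) := fun s => β s - β₀ with hxdef
  have hxcont : ContinuousOn x (Set.Icc 0 1) := hβ.sub continuousOn_const
  obtain ⟨B0, hB0⟩ := isCompact_Icc.exists_bound_of_continuousOn hxcont
  set B := max B0 0 with hBdef
  have hB : ∀ s ∈ Set.Icc (0:ℝ) 1, ‖x s‖ ≤ B := fun s hs =>
    (hB0 s hs).trans (le_max_left _ _)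
  have hBnn : (0:ℝ) ≤ B := le_max_right _ _
  have hKnn : (0:ℝ) ≤ K := by
    obtain ⟨n, hn⟩ := (hk.eventually_ge_atTop 1).exists
    exact (norm_nonneg _).trans (hK n 1 le_rfl hn)
  have hucont : UniformContinuousOn x (Set.Icc 0 1) :=
    isCompact_Icc.uniformContinuousOn_of_continuous hxcont
  set C := ‖Matrix.toEuclideanCLM (𝕜 := ℝ) S‖ with hCdef
  have hCnn : 0 ≤ C := norm_nonneg _
  rw [Metric.tendstoUniformlyOn_iff]
  intro ε hε
  obtain ⟨δ, hδpos, hδ⟩ := (Metric.uniformContinuousOn_iff.mp hucont)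
    (ε / (8 * (C + 1))) (by positivity)
  have hkr : Tendsto (fun n => (k n : ℝ)) atTop atTop :=
    tendsto_natCast_atTop_atTop.comp hk
  have ev1 : ∀ᶠ n in atTop, 1 ≤ k n := hk.eventually_ge_atTop 1
  have ev2 : ∀ᶠ n in atTop, K * M n * B ^ 2 / 2 < ε / 4 := by
    have h : Tendsto (fun n => K * M n * B ^ 2 / 2) atTop (nhds (K * 0 * B ^ 2 / 2)) :=
      (((hM.const_mul K).mul_const (B ^ 2)).div_const 2)
    simp only [mul_zero, zero_mul, zero_div] at h
    exact h.eventually_lt_const (by positivity)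
  have ev3 : ∀ᶠ n in atTop, ∀ i, 1 ≤ i → i ≤ k n →
      ‖Matrix.toEuclideanCLM (𝕜 := ℝ) (W n i - S)‖ < ε / (4 * (B + 1)) := by
    obtain ⟨N, hN⟩ := hWconv (ε / (4 * (B + 1))) (by positivity)
    exact eventually_atTop.mpr ⟨N, hN⟩
  have ev4 : ∀ᶠ n in atTop, 1 / δ < (k n : ℝ) := hkr.eventually_gt_atTop _
  have ev5 : ∀ᶠ n in atTop, C * B * ((k n : ℝ))⁻¹ < ε / 8 := by
    have h : Tendsto (fun n => C * B * ((k n : ℝ))⁻¹) atTop (nhds (C * B * 0)) :=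
      (tendsto_inv_atTop_zero.comp hkr).const_mul (C * B)
    rw [mul_zero] at h
    exact h.eventually_lt_const (by positivity)
  filter_upwards [ev1, ev2, ev3, ev4, ev5] with n hn1 hn2 hn3 hn4 hn5
  intro t ht
  obtain ⟨ht0, ht1⟩ := ht
  set kr : ℝ := (k n : ℝ) with hkrdef
  have hkpos : (0:ℝ) < kr := by
    have : (1:ℝ) ≤ kr := by rw [hkrdef]; exact_mod_cast hn1
    linarith
  set m : ℕ := ⌊t * kr⌋₊ with hmdef
  have hmk : m ≤ k n := by
    have h1 : t * kr ≤ (k n : ℝ) := by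
      calc t * kr ≤ 1 * kr := by gcongr
      _ = kr := one_mul kr
    calc m ≤ ⌊(k n : ℝ)⌋₊ := Nat.floor_le_floor h1
    _ = k n := Nat.floor_natCast _
  have hmt : (m : ℝ) / kr ≤ t := by
    rw [div_le_iff₀ hkpos]
    exact Nat.floor_le (by positivity)
  have htm : t ≤ (m : ℝ) / kr + 1 / kr := by
    have h := Nat.lt_floor_add_one (t * kr)
    rw [← add_div, le_div_iff₀ hkpos]
    linarith
  have hinvk : 1 / kr < δ := by
    rw [div_lt_iff₀ hkpos]
    rw [div_lt_iff₀ hδpos] at hn4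
    linarith [hn4]
  have hik : ∀ i : ℕ, 1 ≤ i → i ≤ k n → ((i : ℝ) / kr) ∈ Set.Icc (0:ℝ) 1 := by
    intro i h1i h2i
    constructor
    · positivity
    · rw [div_le_one hkpos, hkrdef]; exact_mod_cast h2i
  have hintOn : ∀ a b : ℝ, 0 ≤ a → b ≤ 1 → a ≤ b → IntervalIntegrable x volume a b := by
    intro a b ha hb hab
    exact (hxcont.mono (by rw [Set.uIcc_of_le hab]; exact Set.Icc_subset_Icc ha hb)).intervalIntegrable
  -- decomposition
  set e : ℕ → EuclideanSpace ℝ (Fin p) := fun i =>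
    Matrix.toEuclideanCLM (𝕜 := ℝ) ((W n i)⁻¹)
      (d n i - Matrix.toEuclideanCLM (𝕜 := ℝ) (V n i) (x ((i : ℝ) / kr))) with hedef
  set g : ℕ → EuclideanSpace ℝ (Fin p) := fun i =>
    Matrix.toEuclideanCLM (𝕜 := ℝ) (W n i - S) (x ((i : ℝ) / kr)) with hgdef
  have key : ∀ i ∈ Finset.Icc 1 m,
      Matrix.toEuclideanCLM (𝕜 := ℝ) ((W n i)⁻¹) (d n i)
        = e i + g i + Matrix.toEuclideanCLM (𝕜 := ℝ) S (x ((i : ℝ) / kr)) := by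
    intro i hi
    rw [Finset.mem_Icc] at hi
    have h1i : 1 ≤ i := hi.1
    have h2i : i ≤ k n := hi.2.trans hmk
    have hdet : IsUnit (W n i).det := by
      have hVd := (hV n i h1i h2i).det_pos
      have hdm : (W n i).det * (W n i).det = (V n i).det := by
        rw [← Matrix.det_mul, hWsq n i h1i h2i]
      refine isUnit_iff_ne_zero.mpr fun h => ?_
      rw [h, zero_mul] at hdm
      rw [← hdm] at hVd
      exact lt_irrefl _ hVd
    have hWiV : (W n i)⁻¹ * V n i = W n i := by
      conv_lhs => rw [← hWsq n i h1i h2i]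
      rw [← mul_assoc, Matrix.nonsing_inv_mul _ hdet, one_mul]
    have hcomp : Matrix.toEuclideanCLM (𝕜 := ℝ) ((W n i)⁻¹)
        (Matrix.toEuclideanCLM (𝕜 := ℝ) (V n i) (x ((i : ℝ) / kr)))
        = Matrix.toEuclideanCLM (𝕜 := ℝ) (W n i) (x ((i : ℝ) / kr)) := by
      rw [← ContinuousLinearMap.mul_apply, ← map_mul, hWiV]
    have hgi : g i = Matrix.toEuclideanCLM (𝕜 := ℝ) (W n i) (x ((i : ℝ) / kr))
        - Matrix.toEuclideanCLM (𝕜 := ℝ) S (x ((i : ℝ) / kr)) := by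
      rw [hgdef]
      simp only [map_sub, ContinuousLinearMap.sub_apply]
    have hei : e i = Matrix.toEuclideanCLM (𝕜 := ℝ) ((W n i)⁻¹) (d n i)
        - Matrix.toEuclideanCLM (𝕜 := ℝ) (W n i) (x ((i : ℝ) / kr)) := by
      rw [hedef]
      simp only [map_sub, hcomp]
    rw [hei, hgi]
    abel
  -- rewrite the function value
  set A1 : EuclideanSpace ℝ (Fin p) := kr⁻¹ • ∑ i ∈ Finset.Icc 1 m, e i with hA1def
  set A2 : EuclideanSpace ℝ (Fin p) := kr⁻¹ • ∑ i ∈ Finset.Icc 1 m, g i with hA2def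
  set R : EuclideanSpace ℝ (Fin p) :=
    kr⁻¹ • ∑ i ∈ Finset.Icc 1 m, x ((i : ℝ) / kr) - ∫ s in (0:ℝ)..t, x s with hRdef
  have hrepr :
      ((k n : ℝ))⁻¹ • ∑ i ∈ Finset.Icc 1 ⌊t * (k n : ℝ)⌋₊,
            Matrix.toEuclideanCLM (𝕜 := ℝ) ((W n i)⁻¹) (d n i)
          - Matrix.toEuclideanCLM (𝕜 := ℝ) S (∫ s in (0:ℝ)..t, (β s - β₀))
        = A1 + A2 + Matrix.toEuclideanCLM (𝕜 := ℝ) S R := by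
    rw [hA1def, hA2def, hRdef, Finset.sum_congr rfl key]
    rw [map_sub, _root_.map_smul, map_sum]
    simp only [Finset.sum_add_distrib, smul_add]
    abel
  rw [dist_eq_norm]
  simp only [Pi.zero_apply, zero_sub, norm_neg]
  rw [hrepr]
  -- bounds
  have hbound1 : ‖A1‖ ≤ K * M n * B ^ 2 / 2 := by
    rw [hA1def]
    have hterm : ∀ i ∈ Finset.Icc 1 m, ‖e i‖ ≤ K * (M n / 2 * B ^ 2) := by
      intro i hi
      rw [Finset.mem_Icc] at hi
      have h1i := hi.1
      have h2i := hi.2.trans hmk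
      have hx2 : ‖x ((i : ℝ) / kr)‖ ^ 2 ≤ B ^ 2 := by
        have := hB _ (hik i h1i h2i)
        exact pow_le_pow_left₀ (norm_nonneg _) this 2
      calc ‖e i‖ ≤ ‖Matrix.toEuclideanCLM (𝕜 := ℝ) ((W n i)⁻¹)‖ *
            ‖d n i - Matrix.toEuclideanCLM (𝕜 := ℝ) (V n i) (x ((i : ℝ) / kr))‖ :=
              ContinuousLinearMap.le_opNorm _ _
        _ ≤ K * (M n / 2 * B ^ 2) := by
            refine mul_le_mul (hK n i h1i h2i) ?_ (norm_nonneg _) hKnn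
            refine (hd n i h1i h2i).trans ?_
            have hMn := hM0 n
            calc M n / 2 * ‖β ((i : ℝ) / (k n : ℝ)) - β₀‖ ^ 2
                = M n / 2 * ‖x ((i : ℝ) / kr)‖ ^ 2 := rfl
              _ ≤ M n / 2 * B ^ 2 := by gcongr
    have hsum : ‖∑ i ∈ Finset.Icc 1 m, e i‖ ≤ (m : ℝ) * (K * (M n / 2 * B ^ 2)) := by
      refine (norm_sum_le _ _).trans ?_
      calc ∑ i ∈ Finset.Icc 1 m, ‖e i‖ ≤ (Finset.Icc 1 m).card • (K * (M n / 2 * B ^ 2)) :=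
            Finset.sum_le_card_nsmul _ _ _ hterm
        _ = (m : ℝ) * (K * (M n / 2 * B ^ 2)) := by
            rw [Nat.card_Icc]; simp [nsmul_eq_mul]
    rw [norm_smul, Real.norm_eq_abs, abs_of_pos (inv_pos.mpr hkpos)]
    have hmkr : (m : ℝ) ≤ kr := by
      rw [hkrdef]; exact_mod_cast hmk
    have h1 : kr⁻¹ * ((m : ℝ) * (K * (M n / 2 * B ^ 2))) ≤ K * M n * B ^ 2 / 2 := by
      have hQ : (0:ℝ) ≤ K * (M n / 2 * B ^ 2) :=
        mul_nonneg hKnn (mul_nonneg (div_nonneg (hM0 n) (by norm_num)) (by positivity))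
      have : kr⁻¹ * (m : ℝ) ≤ 1 := by
        rw [inv_mul_le_iff₀ hkpos, mul_one]; exact hmkr
      calc kr⁻¹ * ((m : ℝ) * (K * (M n / 2 * B ^ 2)))
          = (kr⁻¹ * (m : ℝ)) * (K * (M n / 2 * B ^ 2)) := by ring
        _ ≤ 1 * (K * (M n / 2 * B ^ 2)) := by gcongr
        _ = K * M n * B ^ 2 / 2 := by ring
    calc kr⁻¹ * ‖∑ i ∈ Finset.Icc 1 m, e i‖
        ≤ kr⁻¹ * ((m : ℝ) * (K * (M n / 2 * B ^ 2))) := by gcongr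
      _ ≤ K * M n * B ^ 2 / 2 := h1
  have hbound2 : ‖A2‖ ≤ ε / (4 * (B + 1)) * B := by
    rw [hA2def]
    have hterm : ∀ i ∈ Finset.Icc 1 m, ‖g i‖ ≤ ε / (4 * (B + 1)) * B := by
      intro i hi
      rw [Finset.mem_Icc] at hi
      have h1i := hi.1
      have h2i := hi.2.trans hmk
      calc ‖g i‖ ≤ ‖Matrix.toEuclideanCLM (𝕜 := ℝ) (W n i - S)‖ * ‖x ((i : ℝ) / kr)‖ :=
            ContinuousLinearMap.le_opNorm _ _
        _ ≤ ε / (4 * (B + 1)) * B := by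
            refine mul_le_mul (hn3 i h1i h2i).le (hB _ (hik i h1i h2i)) (norm_nonneg _)
              (by positivity)
    have hsum : ‖∑ i ∈ Finset.Icc 1 m, g i‖ ≤ (m : ℝ) * (ε / (4 * (B + 1)) * B) := by
      refine (norm_sum_le _ _).trans ?_
      calc ∑ i ∈ Finset.Icc 1 m, ‖g i‖ ≤ (Finset.Icc 1 m).card • (ε / (4 * (B + 1)) * B) :=
            Finset.sum_le_card_nsmul _ _ _ hterm
        _ = (m : ℝ) * (ε / (4 * (B + 1)) * B) := by
            rw [Nat.card_Icc]; simp [nsmul_eq_mul]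
    rw [norm_smul, Real.norm_eq_abs, abs_of_pos (inv_pos.mpr hkpos)]
    have hmkr : (m : ℝ) ≤ kr := by rw [hkrdef]; exact_mod_cast hmk
    have hQ : (0:ℝ) ≤ ε / (4 * (B + 1)) * B := by positivity
    have h1 : kr⁻¹ * (m : ℝ) ≤ 1 := by
      rw [inv_mul_le_iff₀ hkpos, mul_one]; exact hmkr
    calc kr⁻¹ * ‖∑ i ∈ Finset.Icc 1 m, g i‖
        ≤ kr⁻¹ * ((m : ℝ) * (ε / (4 * (B + 1)) * B)) := by gcongr
      _ = (kr⁻¹ * (m : ℝ)) * (ε / (4 * (B + 1)) * B) := by ring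
      _ ≤ 1 * (ε / (4 * (B + 1)) * B) := by gcongr
      _ = ε / (4 * (B + 1)) * B := one_mul _
  -- Riemann sum estimate
  have hR : ‖R‖ ≤ ε / (8 * (C + 1)) + B * (1 / kr) := by
    rw [hRdef]
    have hmkr : (m : ℝ) ≤ kr := by rw [hkrdef]; exact_mod_cast hmk
    have hmk1 : (m : ℝ) / kr ≤ 1 := hmt.trans ht1
    have hm0 : (0:ℝ) ≤ (m : ℝ) / kr := by positivity
    have hint1 : IntervalIntegrable x volume 0 ((m : ℝ) / kr) := hintOn 0 _ le_rfl hmk1 hm0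
    have hint2 : IntervalIntegrable x volume ((m : ℝ) / kr) t := hintOn _ t hm0 ht1 hmt
    have hsplit : (∫ s in (0:ℝ)..t, x s)
        = (∫ s in (0:ℝ)..((m : ℝ) / kr), x s) + ∫ s in ((m : ℝ) / kr)..t, x s :=
      (intervalIntegral.integral_add_adjacent_intervals hint1 hint2).symm
    have hj1top : ∀ j : ℕ, j < m → ((j : ℝ) + 1) / kr ≤ 1 := by
      intro j hj
      rw [div_le_one hkpos]
      have h1 : (j : ℝ) + 1 ≤ (m : ℝ) := by exact_mod_cast hj
      linarith
    have hadj : ∀ j : ℕ, j < m →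
        IntervalIntegrable x volume ((j : ℝ) / kr) (((j : ℝ) + 1) / kr) := by
      intro j hj
      refine hintOn _ _ (by positivity) (hj1top j hj) ?_
      gcongr
      linarith
    have hsum_int : ∑ j ∈ Finset.range m, ∫ s in ((j : ℝ) / kr)..(((j : ℝ) + 1) / kr), x s
        = ∫ s in (0:ℝ)..((m : ℝ) / kr), x s := by
      have h := intervalIntegral.sum_integral_adjacent_intervals
        (a := fun j : ℕ => (j : ℝ) / kr) (n := m) (f := x) (μ := volume) ?_
      · simp only [Nat.cast_zero, zero_div] at h
        rw [← h]
        refine Finset.sum_congr rfl fun j _ => ?_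
        congr 1
        push_cast
        ring
      · intro j hj
        have h2 := hadj j hj
        push_cast
        exact h2
    have hre : ∑ i ∈ Finset.Icc 1 m, x ((i : ℝ) / kr)
        = ∑ j ∈ Finset.range m, x (((j : ℝ) + 1) / kr) := by
      rw [← Finset.Ico_add_one_right_eq_Icc, Finset.sum_Ico_eq_sum_range]
      simp only [Nat.add_sub_cancel]
      refine Finset.sum_congr rfl fun j _ => ?_
      congr 1
      push_cast
      ring
    have hmain : kr⁻¹ • ∑ i ∈ Finset.Icc 1 m, x ((i : ℝ) / kr) - ∫ s in (0:ℝ)..t, x s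
        = (∑ j ∈ Finset.range m, (kr⁻¹ • x (((j : ℝ) + 1) / kr)
            - ∫ s in ((j : ℝ) / kr)..(((j : ℝ) + 1) / kr), x s))
          - ∫ s in ((m : ℝ) / kr)..t, x s := by
      rw [hre, Finset.smul_sum, hsplit, ← hsum_int, Finset.sum_sub_distrib]
      abel
    rw [hmain]
    have hterm : ∀ j ∈ Finset.range m,
        ‖kr⁻¹ • x (((j : ℝ) + 1) / kr)
          - ∫ s in ((j : ℝ) / kr)..(((j : ℝ) + 1) / kr), x s‖
        ≤ ε / (8 * (C + 1)) * (1 / kr) := by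
      intro j hj
      rw [Finset.mem_range] at hj
      have hj1 := hj1top j hj
      have hj0 : (0:ℝ) ≤ (j : ℝ) / kr := by positivity
      have hjle : (j : ℝ) / kr ≤ ((j : ℝ) + 1) / kr := by gcongr; linarith
      have hdiff : ((j : ℝ) + 1) / kr - (j : ℝ) / kr = 1 / kr := by
        field_simp
        ring
      have hconst : kr⁻¹ • x (((j : ℝ) + 1) / kr)
          = ∫ s in ((j : ℝ) / kr)..(((j : ℝ) + 1) / kr), x (((j : ℝ) + 1) / kr) := by
        rw [intervalIntegral.integral_const]
        congr 1
        rw [hdiff]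
        rw [one_div]
      have heq : kr⁻¹ • x (((j : ℝ) + 1) / kr)
            - ∫ s in ((j : ℝ) / kr)..(((j : ℝ) + 1) / kr), x s
          = ∫ s in ((j : ℝ) / kr)..(((j : ℝ) + 1) / kr),
              (x (((j : ℝ) + 1) / kr) - x s) := by
        rw [intervalIntegral.integral_sub intervalIntegrable_const (hadj j hj), hconst]
      rw [heq]
      have hb : ‖∫ s in ((j : ℝ) / kr)..(((j : ℝ) + 1) / kr),
            (x (((j : ℝ) + 1) / kr) - x s)‖
          ≤ ε / (8 * (C + 1)) * |((j : ℝ) + 1) / kr - (j : ℝ) / kr| := by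
        refine intervalIntegral.norm_integral_le_of_norm_le_const ?_
        intro s hs
        rw [Set.uIoc_of_le hjle] at hs
        obtain ⟨hs1, hs2⟩ := hs
        have hsI : s ∈ Set.Icc (0:ℝ) 1 := ⟨hj0.trans hs1.le, hs2.trans hj1⟩
        have hbI : (((j : ℝ) + 1) / kr) ∈ Set.Icc (0:ℝ) 1 := ⟨by positivity, hj1⟩
        have hdist : dist s (((j : ℝ) + 1) / kr) < δ := by
          rw [Real.dist_eq, abs_of_nonpos (by linarith)]
          have h2 : ((j : ℝ) + 1) / kr - s ≤ 1 / kr := by linarith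
          linarith
        have h3 := hδ s hsI _ hbI hdist
        rw [dist_eq_norm, norm_sub_rev] at h3
        exact h3.le
      rw [hdiff, abs_of_pos (by positivity)] at hb
      exact hb
    have hsumb : ‖∑ j ∈ Finset.range m, (kr⁻¹ • x (((j : ℝ) + 1) / kr)
          - ∫ s in ((j : ℝ) / kr)..(((j : ℝ) + 1) / kr), x s)‖
        ≤ ε / (8 * (C + 1)) := by
      refine (norm_sum_le _ _).trans ?_
      have h1 : ∑ j ∈ Finset.range m, ‖kr⁻¹ • x (((j : ℝ) + 1) / kr)
            - ∫ s in ((j : ℝ) / kr)..(((j : ℝ) + 1) / kr), x s‖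
          ≤ (m : ℝ) * (ε / (8 * (C + 1)) * (1 / kr)) := by
        have h2 := Finset.sum_le_card_nsmul _ _ _ hterm
        rwa [Finset.card_range, nsmul_eq_mul] at h2
      refine h1.trans ?_
      have h3 : (m : ℝ) * (ε / (8 * (C + 1)) * (1 / kr))
          = ((m : ℝ) / kr) * (ε / (8 * (C + 1))) := by ring
      rw [h3]
      calc ((m : ℝ) / kr) * (ε / (8 * (C + 1)))
          ≤ 1 * (ε / (8 * (C + 1))) := by gcongr <;> positivity
        _ = ε / (8 * (C + 1)) := one_mul _
    have htail : ‖∫ s in ((m : ℝ) / kr)..t, x s‖ ≤ B * (1 / kr) := by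
      have h1 : ‖∫ s in ((m : ℝ) / kr)..t, x s‖ ≤ B * |t - (m : ℝ) / kr| := by
        refine intervalIntegral.norm_integral_le_of_norm_le_const ?_
        intro s hs
        rw [Set.uIoc_of_le hmt] at hs
        exact hB s ⟨hm0.trans hs.1.le, hs.2.trans ht1⟩
      refine h1.trans ?_
      have h2 : |t - (m : ℝ) / kr| ≤ 1 / kr := by
        rw [abs_of_nonneg (by linarith)]
        linarith
      exact mul_le_mul_of_nonneg_left h2 hBnn
    calc ‖(∑ j ∈ Finset.range m, (kr⁻¹ • x (((j : ℝ) + 1) / kr)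
            - ∫ s in ((j : ℝ) / kr)..(((j : ℝ) + 1) / kr), x s))
          - ∫ s in ((m : ℝ) / kr)..t, x s‖
        ≤ ‖∑ j ∈ Finset.range m, (kr⁻¹ • x (((j : ℝ) + 1) / kr)
            - ∫ s in ((j : ℝ) / kr)..(((j : ℝ) + 1) / kr), x s)‖
          + ‖∫ s in ((m : ℝ) / kr)..t, x s‖ := norm_sub_le _ _
      _ ≤ ε / (8 * (C + 1)) + B * (1 / kr) := add_le_add hsumb htail
  have hbound3 : ‖Matrix.toEuclideanCLM (𝕜 := ℝ) S R‖
      ≤ C * (ε / (8 * (C + 1))) + C * B * (1 / kr) := by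
    calc ‖Matrix.toEuclideanCLM (𝕜 := ℝ) S R‖ ≤ C * ‖R‖ :=
          ContinuousLinearMap.le_opNorm _ _
      _ ≤ C * (ε / (8 * (C + 1)) + B * (1 / kr)) := by gcongr
      _ = C * (ε / (8 * (C + 1))) + C * B * (1 / kr) := by ring
  -- final combination
  have hfin1 : ε / (4 * (B + 1)) * B < ε / 4 := by
    rw [div_mul_eq_mul_div, div_lt_div_iff₀ (by positivity) (by positivity)]
    nlinarith
  have hfin2 : C * (ε / (8 * (C + 1))) < ε / 8 := by
    rw [mul_div_assoc', div_lt_div_iff₀ (by positivity) (by positivity)]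
    nlinarith
  have hfin3 : C * B * (1 / kr) < ε / 8 := by
    rw [mul_one_div, div_eq_mul_inv]
    exact hn5
  calc ‖A1 + A2 + Matrix.toEuclideanCLM (𝕜 := ℝ) S R‖
      ≤ ‖A1‖ + ‖A2‖ + ‖Matrix.toEuclideanCLM (𝕜 := ℝ) S R‖ := norm_add₃_le
    _ < ε := by linarith
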